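/- For every count expression e, take2(eval(e)) = take2(eval(e')), where e' is the count expression obtained from e by replacing each leaf set X with take2(X). (Consequently, for a requirement with exist count_exp where count_exp is == N, it suffices for each node of DVNet to propagate only the first min(|c_u|, 2) smallest elements of its counting set c_u to its upstream neighbors: this is the sufficiency half of Proposition 1 for this case.) -/

import Mathlib

open Pointwise

/-- For a finite set `X` of natural numbers, `take2 X` is the set of the `min(|X|, 2)`
smallest elements of `X`: the first two elements of `X` sorted in increasing order. -/
def take2 (X : Finset ℕ) : Finset ℕ := ((X.sort (· ≤ ·)).take 2).toFinset

theorem take2_nonempty {X : Finset ℕ} (h : X.Nonempty) : (take2 X).Nonempty := by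
  have hpos : 0 < X.card := Finset.card_pos.mpr h
  have hne : (X.sort (· ≤ ·)).take 2 ≠ [] := by
    intro hnil
    rcases List.take_eq_nil_iff.mp hnil with h2 | h2
    · exact two_ne_zero h2
    · have hc : X.card = 0 := by rw [← Finset.length_sort (· ≤ ·), h2]; rfl
      omega
  obtain ⟨y, hy⟩ := List.exists_mem_of_ne_nil _ hne
  exact ⟨y, List.mem_toFinset.mpr hy⟩



lemma list_take2_mem : ∀ (l : List ℕ), l.Pairwise (· < ·) → ∀ n : ℕ,
    (n ∈ l.take 2 ↔ n ∈ l ∧ (l.filter (· < n)).length ≤ 1)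
  | [], _, n => by simp
  | [a], _, n => by
      simp only [List.take, List.mem_singleton, List.mem_cons, List.not_mem_nil, or_false]
      constructor
      · rintro rfl; simp
      · rintro ⟨rfl, -⟩; rfl
  | a :: b :: rest, hs, n => by
      have hab : a < b := (List.pairwise_cons.mp hs).1 b (by simp)
      have hbr : ∀ x ∈ rest, b < x :=
        fun x hx => (List.pairwise_cons.mp (List.pairwise_cons.mp hs).2).1 x hx
      have har : ∀ x ∈ rest, a < x := fun x hx => lt_trans hab (hbr x hx)
      simp only [List.take, List.mem_cons, List.not_mem_nil, or_false]
      constructor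
      · rintro (rfl | rfl)
        · refine ⟨Or.inl rfl, ?_⟩
          have h1 : ¬ (n < n) := lt_irrefl n
          have h2 : ¬ (b < n) := by omega
          have h3 : rest.filter (· < n) = [] := by
            rw [List.filter_eq_nil_iff]
            intro x hx
            simp only [decide_eq_true_eq]
            have := har x hx; omega
          simp [List.filter_cons, h1, h2, h3]
        · refine ⟨Or.inr (Or.inl rfl), ?_⟩
          have h1 : ¬ (n < n) := lt_irrefl n
          have h3 : rest.filter (· < n) = [] := by
            rw [List.filter_eq_nil_iff]
            intro x hx
            simp only [decide_eq_true_eq]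
            have := hbr x hx; omega
          simp [List.filter_cons, h1, hab, h3]
      · rintro ⟨hn, hlen⟩
        rcases hn with rfl | rfl | hn
        · exact Or.inl rfl
        · exact Or.inr rfl
        · exfalso
          have hna := har n hn
          have hnb := hbr n hn
          simp [List.filter_cons, hna, hnb] at hlen

lemma mem_take2 {X : Finset ℕ} {n : ℕ} :
    n ∈ take2 X ↔ n ∈ X ∧ (X.filter (· < n)).card ≤ 1 := by
  rw [take2, List.mem_toFinset, list_take2_mem _ (X.sortedLT_sort.pairwise) n,
    Finset.mem_sort]
  have : ((X.sort (· ≤ ·)).filter (· < n)).length = (X.filter (· < n)).card := by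
    rw [← Multiset.coe_card, ← Multiset.filter_coe, Finset.sort_eq (r := (· ≤ ·)) X]
    rfl
  rw [this]


lemma take2_subset (X : Finset ℕ) : take2 X ⊆ X := fun _ h => (mem_take2.mp h).1

/-- If `S` sits between `take2 T` and `T`, then it has the same two smallest elements. -/
lemma take2_eq_of_between {S T : Finset ℕ} (hST : S ⊆ T) (hTS : take2 T ⊆ S) :
    take2 S = take2 T := by
  ext n
  rw [mem_take2, mem_take2]
  constructor
  · rintro ⟨hnS, hcard⟩
    refine ⟨hST hnS, ?_⟩
    by_contra hbig
    push_neg at hbig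
    -- T has at least two elements below n; its two smallest are in take2 T ⊆ S
    have hTne : T.Nonempty := by
      rcases Finset.card_pos.mp (by omega : 0 < (T.filter (· < n)).card) with ⟨x, hx⟩
      exact ⟨x, (Finset.mem_filter.mp hx).1⟩
    set t1 := T.min' hTne with ht1
    have ht1T : t1 ∈ T := T.min'_mem hTne
    have hEne : (T.erase t1).Nonempty := by
      rw [← Finset.card_pos, Finset.card_erase_of_mem ht1T]
      have : 2 ≤ T.card := le_trans hbig (Finset.card_le_card (Finset.filter_subset _ _))
      omega
    set t2 := (T.erase t1).min' hEne with ht2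
    have ht2E : t2 ∈ T.erase t1 := (T.erase t1).min'_mem hEne
    have ht2T : t2 ∈ T := Finset.mem_of_mem_erase ht2E
    have ht12 : t1 < t2 := lt_of_le_of_ne (T.min'_le _ ht2T) (Ne.symm (Finset.ne_of_mem_erase ht2E))
    -- t1 ∈ take2 T
    have ht1tk : t1 ∈ take2 T := mem_take2.mpr ⟨ht1T, by
      have : T.filter (· < t1) = ∅ := by
        rw [Finset.filter_eq_empty_iff]
        intro x hx
        exact not_lt.mpr (T.min'_le _ hx)
      simp [this]⟩
    have ht2tk : t2 ∈ take2 T := mem_take2.mpr ⟨ht2T, by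
      have : T.filter (· < t2) ⊆ {t1} := by
        intro x hx
        rcases Finset.mem_filter.mp hx with ⟨hxT, hxlt⟩
        rcases eq_or_ne x t1 with rfl | hne
        · exact Finset.mem_singleton_self _
        · exact absurd ((T.erase t1).min'_le x (Finset.mem_erase.mpr ⟨hne, hxT⟩)) (not_le.mpr hxlt)
      calc (T.filter (· < t2)).card ≤ ({t1} : Finset ℕ).card := Finset.card_le_card this
        _ = 1 := Finset.card_singleton _⟩
    -- both are < n
    obtain ⟨a, ha, b, hb, hab⟩ := Finset.one_lt_card.mp hbig
    rcases Finset.mem_filter.mp ha with ⟨haT, han⟩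
    rcases Finset.mem_filter.mp hb with ⟨hbT, hbn⟩
    have ht1n : t1 < n := lt_of_le_of_lt (T.min'_le _ haT) han
    have ht2n : t2 < n := by
      rcases eq_or_ne a t1 with rfl | hne
      · exact lt_of_le_of_lt ((T.erase t1).min'_le b (Finset.mem_erase.mpr ⟨fun h => hab (h ▸ rfl), hbT⟩)) hbn
      · exact lt_of_le_of_lt ((T.erase t1).min'_le a (Finset.mem_erase.mpr ⟨hne, haT⟩)) han
    have : ({t1, t2} : Finset ℕ) ⊆ S.filter (· < n) := by
      intro x hx
      rcases Finset.mem_insert.mp hx with rfl | hx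
      · exact Finset.mem_filter.mpr ⟨hTS ht1tk, ht1n⟩
      · rw [Finset.mem_singleton] at hx
        subst hx
        exact Finset.mem_filter.mpr ⟨hTS ht2tk, ht2n⟩
    have h2 : 2 ≤ (S.filter (· < n)).card := by
      calc 2 = ({t1, t2} : Finset ℕ).card := (Finset.card_pair (ne_of_lt ht12)).symm
        _ ≤ _ := Finset.card_le_card this
    omega
  · rintro ⟨hnT, hcard⟩
    have hntk : n ∈ take2 T := mem_take2.mpr ⟨hnT, hcard⟩
    refine ⟨hTS hntk, ?_⟩
    calc (S.filter (· < n)).card ≤ (T.filter (· < n)).card :=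
          Finset.card_le_card (Finset.filter_subset_filter _ hST)
      _ ≤ 1 := hcard

lemma take2_union (A B : Finset ℕ) :
    take2 (A ∪ B) = take2 (take2 A ∪ take2 B) := by
  refine (take2_eq_of_between (Finset.union_subset_union (take2_subset A) (take2_subset B)) ?_).symm
  intro n hn
  rcases mem_take2.mp hn with ⟨hnAB, hc⟩
  rcases Finset.mem_union.mp hnAB with h | h
  · exact Finset.mem_union_left _ (mem_take2.mpr ⟨h, le_trans (Finset.card_le_card
      (Finset.filter_subset_filter _ Finset.subset_union_left)) hc⟩)
  · exact Finset.mem_union_right _ (mem_take2.mpr ⟨h, le_trans (Finset.card_le_card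
      (Finset.filter_subset_filter _ Finset.subset_union_right)) hc⟩)

lemma take2_add (A B : Finset ℕ) :
    take2 (A + B) = take2 (take2 A + take2 B) := by
  refine (take2_eq_of_between (Finset.add_subset_add (take2_subset A) (take2_subset B)) ?_).symm
  intro n hn
  rcases mem_take2.mp hn with ⟨hnAB, hc⟩
  rcases Finset.mem_add.mp hnAB with ⟨a, ha, b, hb, rfl⟩
  have hA : a ∈ take2 A := by
    refine mem_take2.mpr ⟨ha, ?_⟩
    have hinj : ((A.filter (· < a)).image (· + b)).card = (A.filter (· < a)).card :=
      Finset.card_image_of_injective _ (add_left_injective b)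
    have hsub : (A.filter (· < a)).image (· + b) ⊆ (A + B).filter (· < a + b) := by
      intro x hx
      rcases Finset.mem_image.mp hx with ⟨y, hy, rfl⟩
      rcases Finset.mem_filter.mp hy with ⟨hyA, hylt⟩
      exact Finset.mem_filter.mpr ⟨Finset.add_mem_add hyA hb, by omega⟩
    calc (A.filter (· < a)).card = _ := hinj.symm
      _ ≤ ((A + B).filter (· < a + b)).card := Finset.card_le_card hsub
      _ ≤ 1 := hc
  have hB : b ∈ take2 B := by
    refine mem_take2.mpr ⟨hb, ?_⟩
    have hinj : ((B.filter (· < b)).image (a + ·)).card = (B.filter (· < b)).card :=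
      Finset.card_image_of_injective _ (add_right_injective a)
    have hsub : (B.filter (· < b)).image (a + ·) ⊆ (A + B).filter (· < a + b) := by
      intro x hx
      rcases Finset.mem_image.mp hx with ⟨y, hy, rfl⟩
      rcases Finset.mem_filter.mp hy with ⟨hyB, hylt⟩
      exact Finset.mem_filter.mpr ⟨Finset.add_mem_add ha hyB, by omega⟩
    calc (B.filter (· < b)).card = _ := hinj.symm
      _ ≤ ((A + B).filter (· < a + b)).card := Finset.card_le_card hsub
      _ ≤ 1 := hc
  exact Finset.add_mem_add hA hB

/-- A count expression: a finite binary tree whose leaves are labeled by nonempty finite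
sets of natural numbers and whose internal nodes are labeled either `⊗` or `⊕`. -/
inductive CExpr : Type where
  | leaf : (X : Finset ℕ) → X.Nonempty → CExpr
  | otimes : CExpr → CExpr → CExpr
  | oplus : CExpr → CExpr → CExpr

/-- The value of a count expression: `⊗` is interpreted as the sumset operation
`A ⊗ B = {a + b | a ∈ A, b ∈ B}` and `⊕` as set union. -/
def CExpr.eval : CExpr → Finset ℕ
  | .leaf X _ => X
  | .otimes l r => l.eval + r.eval
  | .oplus l r => l.eval ∪ r.eval

/-- The count expression obtained by replacing each leaf set `X` with `take2 X`. -/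
def CExpr.take2Leaves : CExpr → CExpr
  | .leaf X h => .leaf (take2 X) (take2_nonempty h)
  | .otimes l r => .otimes l.take2Leaves r.take2Leaves
  | .oplus l r => .oplus l.take2Leaves r.take2Leaves

/-- For every count expression `e`,
`take2 (eval e) = take2 (eval e')`, where `e'` is obtained from `e` by replacing each leaf
set `X` with `take2 X`: the two smallest elements of the value of a count expression are
determined by the two smallest elements of each leaf set. -/
theorem take2_eval_cexpr (e : CExpr) : take2 e.eval = take2 e.take2Leaves.eval := by
  induction e with
  | leaf X h =>
      exact (take2_eq_of_between (take2_subset X) (Finset.Subset.refl _)).symm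
  | otimes l r ihl ihr =>
      show take2 (l.eval + r.eval) = take2 (l.take2Leaves.eval + r.take2Leaves.eval)
      rw [take2_add l.eval r.eval, take2_add l.take2Leaves.eval r.take2Leaves.eval, ihl, ihr]
  | oplus l r ihl ihr =>
      show take2 (l.eval ∪ r.eval) = take2 (l.take2Leaves.eval ∪ r.take2Leaves.eval)
      rw [take2_union l.eval r.eval, take2_union l.take2Leaves.eval r.take2Leaves.eval, ihl, ihr]
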